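/- Fix t̂ with 0 < t̂ ≤ τ and let f̂(u) = f_{c,1}(u) for 0 < u ≤ t̂ and f̂(u) = 0 for u > t̂ (negative-feedback release rate). Then the fraction of recyclable molecules satisfies lim_{t→∞} ∫₀^t f̂(u) H(t − u) du + ∫_{t̂}^{τ} f_{c,1}(t) dt + ∫_τ^∞ f_{c,2}(t) dt = C Σ_n c_n [(H_∞ − 1)(t̂ − (1 − exp(−D_v λ_n² t̂))/(D_v λ_n²)) + τ]. (Theorem 4, case t̂ ≤ τ, the fraction χ₁(t̂) = β₁(t→∞) + β₂(t̂).) -/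

import Mathlib

open MeasureTheory Filter Topology Set Real

noncomputable def erf (x : ℝ) : ℝ := (2 / Real.sqrt Real.pi) * ∫ u in (0:ℝ)..x, Real.exp (-u ^ 2)
noncomputable def erfc (x : ℝ) : ℝ := 1 - erf x

lemma gauss_int : ∫ u in Ioi (0:ℝ), Real.exp (-u ^ 2) = Real.sqrt Real.pi / 2 := by
  simpa using integral_gaussian_Ioi 1

lemma gauss_integrable : IntegrableOn (fun u => Real.exp (-u ^ 2)) (Ioi (0:ℝ)) := by
  simpa using integrableOn_Ioi_exp_neg_mul_sq_iff.mpr (by norm_num : (0:ℝ) < 1)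

lemma erf_tendsto : Tendsto erf atTop (𝓝 1) := by
  have h := intervalIntegral_tendsto_integral_Ioi 0 gauss_integrable tendsto_id
  have h2 : Tendsto erf atTop (𝓝 ((2 / Real.sqrt Real.pi) * (Real.sqrt Real.pi / 2))) := by
    unfold erf
    rw [← gauss_int]
    exact h.const_mul _
  have : (2 / Real.sqrt Real.pi) * (Real.sqrt Real.pi / 2) = 1 := by
    field_simp
  rw [this] at h2
  simpa [gauss_int] using h2

lemma erfc_eq {x : ℝ} (hx : 0 ≤ x) :
    erfc x = (2 / Real.sqrt Real.pi) * ∫ u in Ioi x, Real.exp (-u ^ 2) := by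
  have hsplit : (∫ u in Ioc 0 x, Real.exp (-u ^ 2)) + ∫ u in Ioi x, Real.exp (-u ^ 2)
      = ∫ u in Ioi (0:ℝ), Real.exp (-u ^ 2) := by
    rw [← setIntegral_union (by simp [Set.disjoint_left]) measurableSet_Ioi
      (gauss_integrable.mono_set (fun u hu => hu.1))
      (gauss_integrable.mono_set (fun u hu => lt_of_le_of_lt hx hu))]
    rw [Ioc_union_Ioi_eq_Ioi hx]
  have herf : erf x = (2 / Real.sqrt Real.pi) * ∫ u in Ioc 0 x, Real.exp (-u ^ 2) := by
    rw [erf, intervalIntegral.integral_of_le hx]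
  rw [gauss_int] at hsplit
  rw [erfc, herf]
  have hpi : (0:ℝ) < Real.sqrt Real.pi := by positivity
  have h1 : (2 / Real.sqrt Real.pi) * ((∫ u in Ioc 0 x, Real.exp (-u ^ 2))
      + ∫ u in Ioi x, Real.exp (-u ^ 2)) = 1 := by
    rw [hsplit]; field_simp
  nlinarith [h1]

lemma erfc_nonneg {x : ℝ} (hx : 0 ≤ x) : 0 ≤ erfc x := by
  rw [erfc_eq hx]
  have : 0 ≤ ∫ u in Ioi x, Real.exp (-u ^ 2) :=
    setIntegral_nonneg measurableSet_Ioi (fun u _ => (Real.exp_pos _).le)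
  positivity

lemma integral_mul_exp_sq (x : ℝ) :
    ∫ u in Ioi x, u * Real.exp (-u ^ 2) = Real.exp (-x ^ 2) / 2 := by
  have := integral_Ioi_of_hasDerivAt_of_tendsto (f := fun u => -Real.exp (-u ^ 2) / 2)
    (f' := fun u => u * Real.exp (-u ^ 2)) (a := x) (m := 0) ?_ ?_ ?_ ?_
  · rw [this]; ring
  · exact (Continuous.continuousWithinAt (by continuity))
  · intro u _
    have : HasDerivAt (fun u : ℝ => -Real.exp (-u ^ 2) / 2) (-(Real.exp (-u^2) * -(2*u))/2) u := by
      have h1 : HasDerivAt (fun u : ℝ => -u ^ 2) (-(2*u)) u := by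
        simpa using ((hasDerivAt_pow 2 u).fun_neg)
      exact ((h1.exp).neg).div_const 2
    refine this.congr_deriv ?_; ring
  · apply Integrable.restrict
    simpa using integrable_mul_exp_neg_mul_sq (by norm_num : (0:ℝ) < 1)
  · have : Tendsto (fun u : ℝ => -Real.exp (-u ^ 2) / 2) atTop (𝓝 (-0/2)) := by
      apply Tendsto.div_const
      apply Tendsto.neg
      apply Real.tendsto_exp_atBot.comp
      apply tendsto_neg_atBot_iff.mpr
      exact tendsto_pow_atTop (by norm_num)
    simpa using this

lemma erfc_le {x : ℝ} (hx : 0 < x) : erfc x ≤ Real.exp (-x ^ 2) / x := by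
  rw [erfc_eq hx.le]
  have hb : ∫ u in Ioi x, Real.exp (-u ^ 2) ≤ (1/x) * ∫ u in Ioi x, u * Real.exp (-u ^ 2) := by
    rw [← integral_const_mul]
    apply setIntegral_mono_on
    · exact gauss_integrable.mono_set (fun u hu => lt_of_le_of_lt hx.le hu)
    · apply Integrable.const_mul
      apply Integrable.restrict
      simpa using integrable_mul_exp_neg_mul_sq (by norm_num : (0:ℝ) < 1)
    · exact measurableSet_Ioi
    · intro u hu
      rw [Set.mem_Ioi] at hu
      rw [one_div, inv_mul_eq_div, le_div_iff₀ hx]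
      nlinarith [Real.exp_pos (-u^2), hu]
  rw [integral_mul_exp_sq] at hb
  have hpi : 1 ≤ Real.sqrt Real.pi := by
    rw [show (1:ℝ) = Real.sqrt 1 by simp]
    exact Real.sqrt_le_sqrt (by nlinarith [Real.pi_gt_three])
  calc 2 / Real.sqrt Real.pi * ∫ u in Ioi x, Real.exp (-u ^ 2)
      ≤ 2 / 1 * ((1/x) * (Real.exp (-x ^ 2) / 2)) := by
        apply mul_le_mul _ hb (setIntegral_nonneg measurableSet_Ioi (fun u _ => (Real.exp_pos _).le)) (by norm_num)
        gcongr
    _ = Real.exp (-x ^ 2) / x := by field_simp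

lemma erf_continuous : Continuous erf := by
  unfold erf
  exact continuous_const.mul (intervalIntegral.continuous_primitive
    (fun a b => (Continuous.intervalIntegrable (by continuity) a b)) 0)

lemma erfc_continuous : Continuous erfc := continuous_const.sub erf_continuous

lemma sqrt_tendsto : Tendsto Real.sqrt atTop atTop := by
  apply tendsto_atTop_atTop.mpr
  intro b
  refine ⟨b ^ 2, fun a ha => ?_⟩
  rcases le_or_gt b 0 with hb | hb
  · exact hb.trans (Real.sqrt_nonneg a)
  · exact (Real.le_sqrt hb.le ((sq_nonneg b).trans ha)).mpr ha

lemma sqrt_mul_tendsto {k : ℝ} (hk : 0 < k) :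
    Tendsto (fun t : ℝ => Real.sqrt (k * t)) atTop atTop :=
  sqrt_tendsto.comp (tendsto_id.const_mul_atTop hk)

lemma erfc_term_tendsto_zero {Dσ kd γ ζ : ℝ} (hDσ : 0 < Dσ) (hkd : 0 < kd) (hγ : 0 < γ)
    (hζdef : ζ = γ ^ 2 * Dσ - kd) :
    Tendsto (fun t : ℝ => Real.exp (ζ * t) * erfc (γ * Real.sqrt (Dσ * t))) atTop (𝓝 0) := by
  have hg : Tendsto (fun t : ℝ => Real.exp (-(kd * t)) * (γ * Real.sqrt (Dσ * t))⁻¹)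
      atTop (𝓝 (0 * 0)) := by
    apply Tendsto.mul
    · exact Real.tendsto_exp_atBot.comp
        (tendsto_neg_atBot_iff.mpr (tendsto_id.const_mul_atTop hkd))
    · exact Tendsto.inv_tendsto_atTop ((sqrt_mul_tendsto hDσ).const_mul_atTop hγ)
  rw [mul_zero] at hg
  apply tendsto_of_tendsto_of_tendsto_of_le_of_le' tendsto_const_nhds hg
  · filter_upwards [eventually_gt_atTop 0] with t ht
    have hx : 0 < γ * Real.sqrt (Dσ * t) := by positivity
    exact mul_nonneg (Real.exp_pos _).le (erfc_nonneg hx.le)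
  · filter_upwards [eventually_gt_atTop 0] with t ht
    have hx : 0 < γ * Real.sqrt (Dσ * t) := by positivity
    have hsq : (γ * Real.sqrt (Dσ * t)) ^ 2 = γ ^ 2 * Dσ * t := by
      rw [mul_pow, Real.sq_sqrt (by positivity : (0:ℝ) ≤ Dσ * t)]; ring
    calc Real.exp (ζ * t) * erfc (γ * Real.sqrt (Dσ * t))
        ≤ Real.exp (ζ * t) * (Real.exp (-(γ * Real.sqrt (Dσ * t)) ^ 2) / (γ * Real.sqrt (Dσ * t))) := by
          gcongr
          exact erfc_le hx
      _ = Real.exp (-(kd * t)) * (γ * Real.sqrt (Dσ * t))⁻¹ := by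
          rw [hsq, hζdef, div_eq_mul_inv, ← mul_assoc, ← Real.exp_add]
          ring_nf

lemma tendsto_H {Dσ kd γ w ζ : ℝ} (hDσ : 0 < Dσ) (hkd : 0 < kd) (hγ : 0 < γ)
    (hζdef : ζ = γ ^ 2 * Dσ - kd) (hζ : ζ ≠ 0) (H : ℝ → ℝ)
    (hH : ∀ t, 0 < t → H t = w / Real.sqrt (kd * Dσ) * erf (Real.sqrt (kd * t)) -
          w * γ / ζ * (Real.exp (ζ * t) * erfc (γ * Real.sqrt (Dσ * t)) +
            γ * Real.sqrt (Dσ / kd) * erf (Real.sqrt (kd * t)) - 1))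
    (Hinf : ℝ)
    (hHinf : Hinf = w / Real.sqrt (Dσ * kd) - w * γ ^ 2 / ζ * Real.sqrt (Dσ / kd) + w * γ / ζ) :
    Tendsto H atTop (𝓝 Hinf) := by
  have herf : Tendsto (fun t : ℝ => erf (Real.sqrt (kd * t))) atTop (𝓝 1) :=
    erf_tendsto.comp (sqrt_mul_tendsto hkd)
  have h2 := erfc_term_tendsto_zero hDσ hkd hγ hζdef
  have hform : Tendsto (fun t : ℝ => w / Real.sqrt (kd * Dσ) * erf (Real.sqrt (kd * t)) -
      w * γ / ζ * (Real.exp (ζ * t) * erfc (γ * Real.sqrt (Dσ * t)) +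
        γ * Real.sqrt (Dσ / kd) * erf (Real.sqrt (kd * t)) - 1)) atTop
      (𝓝 (w / Real.sqrt (kd * Dσ) * 1 -
        w * γ / ζ * (0 + γ * Real.sqrt (Dσ / kd) * 1 - 1))) := by
    exact (herf.const_mul _).sub (Tendsto.const_mul _
      (((h2.add ((herf.const_mul _))).sub_const 1)))
  have heq : w / Real.sqrt (kd * Dσ) * 1 -
      w * γ / ζ * (0 + γ * Real.sqrt (Dσ / kd) * 1 - 1) = Hinf := by
    rw [hHinf, mul_comm kd Dσ]; ring
  rw [heq] at hform
  apply hform.congr'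
  filter_upwards [eventually_gt_atTop 0] with t ht
  exact (hH t ht).symm

lemma term_int {a : ℝ} (ha : 0 < a) (s T : ℝ) :
    ∫ u in s..T, (1 - Real.exp (-(a * u))) =
      (T - s) - (Real.exp (-(a * s)) - Real.exp (-(a * T))) / a := by
  have key : ∀ u : ℝ, HasDerivAt (fun u => u + Real.exp (-(a * u)) / a)
      (1 - Real.exp (-(a * u))) u := by
    intro u
    have h1 : HasDerivAt (fun u : ℝ => -(a * u)) (-a) u := by
      have := ((hasDerivAt_id u).const_mul a).neg; simp only [id_eq, mul_one] at this; exact this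
    have h2 := (h1.exp.div_const a)
    have := (hasDerivAt_id u).fun_add h2
    refine this.congr_deriv ?_
    field_simp
    ring
  rw [intervalIntegral.integral_eq_sub_of_hasDerivAt (fun u _ => key u)
    ((Continuous.intervalIntegrable (by continuity) s T))]
  field_simp
  ring

lemma exp_integrableOn_Ioi {a : ℝ} (ha : 0 < a) (s : ℝ) :
    IntegrableOn (fun u => Real.exp (-(a * u))) (Set.Ioi s) := by
  have := exp_neg_integrableOn_Ioi s ha
  simpa [neg_mul] using this

lemma exp_int_Ioi {a : ℝ} (ha : 0 < a) (s : ℝ) :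
    ∫ u in Ioi s, Real.exp (-(a * u)) = Real.exp (-(a * s)) / a := by
  have := integral_Ioi_of_hasDerivAt_of_tendsto
    (f := fun u => -Real.exp (-(a * u)) / a) (f' := fun u => Real.exp (-(a * u)))
    (a := s) (m := 0) (Continuous.continuousWithinAt (by continuity)) ?_ (exp_integrableOn_Ioi ha s) ?_
  · rw [this]; ring
  · intro u _
    have h1 : HasDerivAt (fun u : ℝ => -(a * u)) (-a) u := by
      have := ((hasDerivAt_id u).const_mul a).neg; simp only [id_eq, mul_one] at this; exact this
    have := (h1.exp.fun_neg.div_const a)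
    refine this.congr_deriv ?_
    field_simp
  · have : Tendsto (fun u : ℝ => -Real.exp (-(a * u)) / a) atTop (𝓝 (-0 / a)) := by
      apply Tendsto.div_const
      apply Tendsto.neg
      exact Real.tendsto_exp_atBot.comp (tendsto_neg_atBot_iff.mpr (tendsto_id.const_mul_atTop ha))
    simpa using this

lemma Abound {a s T : ℝ} (ha : 0 < a) (hs : 0 ≤ s) (hsT : s ≤ T) :
    0 ≤ (T - s) - (Real.exp (-(a * s)) - Real.exp (-(a * T))) / a ∧
      (T - s) - (Real.exp (-(a * s)) - Real.exp (-(a * T))) / a ≤ T - s := by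
  have h1 : Real.exp (-(a * T)) ≤ Real.exp (-(a * s)) := by
    apply Real.exp_le_exp.mpr; nlinarith
  have h2 : Real.exp (-(a * s)) ≤ 1 := Real.exp_le_one_iff.mpr (by nlinarith)
  have h3 : -(a * (T - s)) + 1 ≤ Real.exp (-(a * (T - s))) := Real.add_one_le_exp _
  have h4 : Real.exp (-(a * T)) = Real.exp (-(a * s)) * Real.exp (-(a * (T - s))) := by
    rw [← Real.exp_add]; ring_nf
  have h5 : 0 < Real.exp (-(a * s)) := Real.exp_pos _
  have h6 : 0 ≤ Real.exp (-(a * (T - s))) := (Real.exp_pos _).le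
  constructor
  · rw [sub_nonneg, div_le_iff₀ ha]
    nlinarith
  · have : 0 ≤ (Real.exp (-(a * s)) - Real.exp (-(a * T))) / a :=
      div_nonneg (by linarith) ha.le
    linarith

lemma fc1_int {a : ℕ → ℝ} (ha : ∀ n, 0 < a n) {c : ℕ → ℝ} (hsum : Summable fun n => |c n|)
    (C s T : ℝ) (hs : 0 ≤ s) (hsT : s ≤ T) :
    ∫ x in s..T, (C * ∑' n, c n * (1 - Real.exp (-(a n * x)))) =
      C * ∑' n, c n * ((T - s) - (Real.exp (-(a n * s)) - Real.exp (-(a n * T))) / a n) := by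
  rw [intervalIntegral.integral_of_le hsT, MeasureTheory.integral_const_mul]
  congr 1
  have hint : ∀ n, Integrable (fun x => c n * (1 - Real.exp (-(a n * x))))
      (volume.restrict (Ioc s T)) :=
    fun n => (Continuous.integrableOn_Ioc (by continuity))
  have habs : ∀ n, (∫ x in Ioc s T, ‖c n * (1 - Real.exp (-(a n * x)))‖) ≤ |c n| * (T - s) := by
    intro n
    calc (∫ x in Ioc s T, ‖c n * (1 - Real.exp (-(a n * x)))‖)
        ≤ ∫ _x in Ioc s T, |c n| := by
          apply setIntegral_mono_on (hint n).norm (integrableOn_const (by simp))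
            measurableSet_Ioc
          intro u hu
          rw [norm_mul, Real.norm_eq_abs, Real.norm_eq_abs]
          have hu0 : 0 ≤ u := le_trans hs hu.1.le
          have he1 : Real.exp (-(a n * u)) ≤ 1 :=
            Real.exp_le_one_iff.mpr (by nlinarith [ha n, (ha n).le])
          have he0 : 0 < Real.exp (-(a n * u)) := Real.exp_pos _
          have : |1 - Real.exp (-(a n * u))| ≤ 1 := by
            rw [abs_of_nonneg (by linarith)]; linarith
          nlinarith [abs_nonneg (c n)]
      _ = |c n| * (T - s) := by
          rw [setIntegral_const, smul_eq_mul, Real.volume_real_Ioc,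
            max_eq_left (by linarith), mul_comm]
  rw [← MeasureTheory.integral_tsum_of_summable_integral_norm hint]
  · congr 1
    funext n
    have : ∫ x in Ioc s T, c n * (1 - Real.exp (-(a n * x))) =
        ∫ x in s..T, c n * (1 - Real.exp (-(a n * x))) :=
      (intervalIntegral.integral_of_le hsT).symm
    rw [this, intervalIntegral.integral_const_mul, term_int (ha n)]
  · apply Summable.of_nonneg_of_le (fun n => integral_nonneg (fun x => norm_nonneg _)) habs
    exact hsum.mul_right _

lemma fc2_term_int {a : ℝ} (ha : 0 < a) (k τ : ℝ) :
    ∫ x in Ioi τ, k * (Real.exp (-(a * (x - τ))) - Real.exp (-(a * x))) =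
      k * ((1 - Real.exp (-(a * τ))) / a) := by
  have hfun : ∀ x : ℝ, k * (Real.exp (-(a * (x - τ))) - Real.exp (-(a * x))) =
      (k * (Real.exp (a * τ) - 1)) * Real.exp (-(a * x)) := by
    intro x
    rw [show -(a * (x - τ)) = a * τ + -(a * x) by ring, Real.exp_add]
    ring
  rw [setIntegral_congr_fun measurableSet_Ioi (fun x _ => hfun x),
    MeasureTheory.integral_const_mul, exp_int_Ioi ha]
  have key : (Real.exp (a * τ) - 1) * Real.exp (-(a * τ)) = 1 - Real.exp (-(a * τ)) := by
    rw [sub_mul, ← Real.exp_add]; simp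
  calc k * (Real.exp (a * τ) - 1) * (Real.exp (-(a * τ)) / a)
      = k * (((Real.exp (a * τ) - 1) * Real.exp (-(a * τ))) / a) := by ring
    _ = _ := by rw [key]

lemma fc2_int {a : ℕ → ℝ} (ha : ∀ n, 0 < a n) {c : ℕ → ℝ} (hsum : Summable fun n => |c n|)
    (C τ : ℝ) (hτ : 0 ≤ τ) :
    ∫ x in Ioi τ, (C * ∑' n, c n * (Real.exp (-(a n * (x - τ))) - Real.exp (-(a n * x)))) =
      C * ∑' n, c n * ((1 - Real.exp (-(a n * τ))) / a n) := by
  have hfun : ∀ n (x : ℝ), c n * (Real.exp (-(a n * (x - τ))) - Real.exp (-(a n * x))) =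
      (c n * (Real.exp (a n * τ) - 1)) * Real.exp (-(a n * x)) := by
    intro n x
    rw [show -(a n * (x - τ)) = a n * τ + -(a n * x) by ring, Real.exp_add]
    ring
  have hint : ∀ n, Integrable
      (fun x => c n * (Real.exp (-(a n * (x - τ))) - Real.exp (-(a n * x))))
      (volume.restrict (Ioi τ)) := by
    intro n
    have : Integrable (fun x => (c n * (Real.exp (a n * τ) - 1)) * Real.exp (-(a n * x)))
        (volume.restrict (Ioi τ)) := (exp_integrableOn_Ioi (ha n) τ).const_mul _
    exact this.congr (by filter_upwards with x; rw [hfun])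
  rw [MeasureTheory.integral_const_mul,
    ← MeasureTheory.integral_tsum_of_summable_integral_norm hint]
  · congr 1
    exact tsum_congr (fun n => fc2_term_int (ha n) (c n) τ)
  · apply Summable.of_nonneg_of_le (fun n => integral_nonneg (fun x => norm_nonneg _))
      (fun n => ?_) (hsum.mul_right τ)
    have habs : ∀ x ∈ Ioi τ, ‖c n * (Real.exp (-(a n * (x - τ))) - Real.exp (-(a n * x)))‖
        = |c n| * (Real.exp (-(a n * (x - τ))) - Real.exp (-(a n * x))) := by
      intro x hx
      rw [Real.norm_eq_abs, abs_mul, abs_of_nonneg (sub_nonneg.mpr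
        (Real.exp_le_exp.mpr (by nlinarith [ha n, mem_Ioi.mp hx])))]
    rw [setIntegral_congr_fun measurableSet_Ioi habs, fc2_term_int (ha n) (|c n|) τ]
    have h3 : (1 - Real.exp (-(a n * τ))) / a n ≤ τ := by
      rw [div_le_iff₀ (ha n)]
      nlinarith [Real.add_one_le_exp (-(a n * τ))]
    have h4 : 0 ≤ (1 - Real.exp (-(a n * τ))) / a n := by
      apply div_nonneg _ (ha n).le
      have : Real.exp (-(a n * τ)) ≤ 1 :=
        Real.exp_le_one_iff.mpr (by nlinarith [ha n])
      linarith
    nlinarith [abs_nonneg (c n)]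

lemma term_bd {a : ℕ → ℝ} (ha : ∀ n, 0 < a n) (c : ℕ → ℝ) {u : ℝ} (hu : 0 ≤ u) (n : ℕ) :
    ‖c n * (1 - Real.exp (-(a n * u)))‖ ≤ |c n| := by
  rw [Real.norm_eq_abs, abs_mul]
  have he1 : Real.exp (-(a n * u)) ≤ 1 := Real.exp_le_one_iff.mpr (by nlinarith [ha n])
  have he0 : 0 < Real.exp (-(a n * u)) := Real.exp_pos _
  have : |1 - Real.exp (-(a n * u))| ≤ 1 := by
    rw [abs_of_nonneg (by linarith)]; linarith
  nlinarith [abs_nonneg (c n)]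

lemma fc1_bound {a : ℕ → ℝ} (ha : ∀ n, 0 < a n) {c : ℕ → ℝ}
    (hsum : Summable fun n => |c n|) (C : ℝ) {u : ℝ} (hu : 0 ≤ u) :
    |C * ∑' n, c n * (1 - Real.exp (-(a n * u)))| ≤ |C| * ∑' n, |c n| := by
  rw [abs_mul]
  apply mul_le_mul_of_nonneg_left _ (abs_nonneg C)
  have hs2 : Summable fun n => ‖c n * (1 - Real.exp (-(a n * u)))‖ :=
    hsum.of_nonneg_of_le (fun n => norm_nonneg _) (term_bd ha c hu)
  calc |∑' n, c n * (1 - Real.exp (-(a n * u)))|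
      ≤ ∑' n, ‖c n * (1 - Real.exp (-(a n * u)))‖ := norm_tsum_le_tsum_norm hs2
    _ ≤ ∑' n, |c n| := Summable.tsum_le_tsum (term_bd ha c hu) hs2 hsum

lemma fc1_cont {a : ℕ → ℝ} (ha : ∀ n, 0 < a n) {c : ℕ → ℝ}
    (hsum : Summable fun n => |c n|) (C : ℝ) :
    Continuous fun u : ℝ => C * ∑' n, c n * (1 - Real.exp (-(a n * max u 0))) := by
  apply continuous_const.mul
  apply continuous_tsum _ hsum
  · intro n x
    exact term_bd ha c (le_max_right x 0) n
  · intro n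
    continuity

set_option maxHeartbeats 1000000 in
theorem stmt_17
    (rT kf μ Nv Dv : ℝ)
    (hrT : 0 < rT) (hkf : 0 < kf) (hμ : 0 < μ) (hNv : 0 < Nv) (hDv : 0 < Dv)
    (τ : ℝ) (hτ : τ = Nv / μ)
    (C : ℝ) (hCdef : C = 4 * rT ^ 2 * kf * μ / (Nv * Dv))
    (lam : ℕ → ℝ) (hlam : ∀ n, 0 < lam n)
    (hne : ∀ n, 2 * lam n * rT ≠ Real.sin (2 * lam n * rT))
    (c : ℕ → ℝ)
    (hc : ∀ n, c n = lam n * (Real.sin (lam n * rT) / (lam n * rT)) /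
          (2 * lam n * rT - Real.sin (2 * lam n * rT)))
    (hsum : Summable fun n => |c n|)
    (fc1 : ℝ → ℝ)
    (hfc1 : ∀ t, fc1 t = C * ∑' n, c n * (1 - Real.exp (-(Dv * lam n ^ 2 * t))))
    (fc2 : ℝ → ℝ)
    (hfc2 : ∀ t, fc2 t = C * ∑' n, c n *
          (Real.exp (-(Dv * lam n ^ 2 * (t - τ))) - Real.exp (-(Dv * lam n ^ 2 * t))))
    (Dσ kd γ w : ℝ) (hDσ : 0 < Dσ) (hkd : 0 < kd) (hγ : 0 < γ)
    (ζ : ℝ) (hζdef : ζ = γ ^ 2 * Dσ - kd) (hζ : ζ ≠ 0)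
    (H : ℝ → ℝ)
    (hH : ∀ t, 0 < t → H t = w / Real.sqrt (kd * Dσ) * erf (Real.sqrt (kd * t)) -
          w * γ / ζ * (Real.exp (ζ * t) * erfc (γ * Real.sqrt (Dσ * t)) +
            γ * Real.sqrt (Dσ / kd) * erf (Real.sqrt (kd * t)) - 1))
    (Hinf : ℝ)
    (hHinf : Hinf = w / Real.sqrt (Dσ * kd) - w * γ ^ 2 / ζ * Real.sqrt (Dσ / kd) + w * γ / ζ)
    (tHat : ℝ) (h1 : 0 < tHat) (h2 : tHat ≤ τ)
    (fhat : ℝ → ℝ)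
    (hfa : ∀ u, 0 < u → u ≤ tHat → fhat u = fc1 u)
    (hfb : ∀ u, tHat < u → fhat u = 0) :
    Tendsto (fun t => (∫ u in (0:ℝ)..t, fhat u * H (t - u)) +
        (∫ x in tHat..τ, fc1 x) + ∫ x in Set.Ioi τ, fc2 x) atTop
      (𝓝 (C * ∑' n, c n * ((Hinf - 1) *
        (tHat - (1 - Real.exp (-(Dv * lam n ^ 2 * tHat))) / (Dv * lam n ^ 2)) + τ))) := by
  set a : ℕ → ℝ := fun n => Dv * lam n ^ 2 with ha_def
  have ha : ∀ n, 0 < a n := fun n => by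
    have := hlam n; positivity
  have hτ0 : 0 < τ := by rw [hτ]; positivity
  -- Values of the two constant integrals
  have hI2 : (∫ x in tHat..τ, fc1 x) =
      C * ∑' n, c n * ((τ - tHat) - (Real.exp (-(a n * tHat)) - Real.exp (-(a n * τ))) / a n) := by
    rw [show (fun x => fc1 x) = fun x => C * ∑' n, c n * (1 - Real.exp (-(a n * x))) from
      funext (fun x => hfc1 x)]
    exact fc1_int ha hsum C tHat τ h1.le h2
  have hI3 : (∫ x in Set.Ioi τ, fc2 x) =
      C * ∑' n, c n * ((1 - Real.exp (-(a n * τ))) / a n) := by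
    rw [show (fun x => fc2 x) = fun x =>
      C * ∑' n, c n * (Real.exp (-(a n * (x - τ))) - Real.exp (-(a n * x))) from
      funext (fun x => hfc2 x)]
    exact fc2_int ha hsum C τ hτ0.le
  have hI1 : (∫ x in (0:ℝ)..tHat, fc1 x) =
      C * ∑' n, c n * (tHat - (1 - Real.exp (-(a n * tHat))) / a n) := by
    rw [show (fun x => fc1 x) = fun x => C * ∑' n, c n * (1 - Real.exp (-(a n * x))) from
      funext (fun x => hfc1 x)]
    rw [fc1_int ha hsum C 0 tHat le_rfl h1.le]
    congr 1
    apply tsum_congr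
    intro n
    rw [mul_zero, neg_zero, Real.exp_zero, sub_zero]
  -- limit of H
  have hHtends : Tendsto H atTop (𝓝 Hinf) := tendsto_H hDσ hkd hγ hζdef hζ H hH Hinf hHinf
  -- continuous version of H on (0, ∞)
  set G : ℝ → ℝ := fun t => w / Real.sqrt (kd * Dσ) * erf (Real.sqrt (kd * t)) -
          w * γ / ζ * (Real.exp (ζ * t) * erfc (γ * Real.sqrt (Dσ * t)) +
            γ * Real.sqrt (Dσ / kd) * erf (Real.sqrt (kd * t)) - 1) with hG_def
  have hGcont : Continuous G := by
    apply Continuous.sub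
    · exact continuous_const.mul (erf_continuous.comp
        (Real.continuous_sqrt.comp (continuous_const.mul continuous_id)))
    · apply continuous_const.mul
      apply Continuous.sub
      · apply Continuous.add
        · exact ((Real.continuous_exp.comp (continuous_const.mul continuous_id)).mul
            (erfc_continuous.comp (continuous_const.mul
              (Real.continuous_sqrt.comp (continuous_const.mul continuous_id)))))
        · exact continuous_const.mul (erf_continuous.comp
            (Real.continuous_sqrt.comp (continuous_const.mul continuous_id)))
      · exact continuous_const
  have hHG : ∀ t, 0 < t → H t = G t := hH
  -- bound on H on [1, ∞)
  obtain ⟨M, hM0, hM⟩ : ∃ M, 0 ≤ M ∧ ∀ t, (1:ℝ) ≤ t → |H t| ≤ M := by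
    have h1' : ∀ᶠ t in atTop, |H t| ≤ |Hinf| + 1 := by
      have := hHtends.abs
      exact this.eventually (eventually_le_nhds (lt_add_one |Hinf|))
    obtain ⟨T₀', hT₀'⟩ := eventually_atTop.mp h1'
    set T₀ := max T₀' 1 with hT₀def
    obtain ⟨M₁, hM₁⟩ := (isCompact_Icc (a := (1:ℝ)) (b := T₀)).exists_bound_of_continuousOn
      hGcont.continuousOn
    refine ⟨max M₁ (|Hinf| + 1), le_trans (by positivity) (le_max_right _ _), fun t ht => ?_⟩
    rcases le_or_gt t T₀ with h | h
    · rw [hHG t (by linarith)]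
      exact le_trans (hM₁ t ⟨ht, h⟩) (le_max_left _ _)
    · exact le_trans (hT₀' t (le_trans (le_max_left _ _) h.le)) (le_max_right _ _)
  -- bound on fc1 on [0, ∞)
  set K : ℝ := |C| * ∑' n, |c n| with hK_def
  have hK0 : 0 ≤ K := by
    apply mul_nonneg (abs_nonneg _)
    exact tsum_nonneg (fun n => abs_nonneg _)
  have hfc1bd : ∀ u : ℝ, 0 ≤ u → |fc1 u| ≤ K := by
    intro u hu
    rw [hfc1, hK_def]
    exact fc1_bound ha hsum C hu
  set F : ℝ → ℝ := fun u => C * ∑' n, c n * (1 - Real.exp (-(a n * max u 0))) with hF_def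
  have hFcont : Continuous F := fc1_cont ha hsum C
  have hFeq : ∀ u : ℝ, 0 ≤ u → fc1 u = F u := by
    intro u hu
    rw [hfc1, hF_def]
    simp only [max_eq_left hu, ha_def]
  -- eventual equality of the convolution term
  have hconv_eq : ∀ᶠ t in atTop, (∫ u in (0:ℝ)..t, fhat u * H (t - u)) =
      ∫ u in Ioc 0 tHat, fc1 u * H (t - u) := by
    filter_upwards [eventually_ge_atTop tHat] with t ht
    rw [intervalIntegral.integral_of_le (le_trans h1.le ht)]
    have hstep : ∀ u ∈ Ioc (0:ℝ) t, fhat u * H (t - u) =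
        (Ioc (0:ℝ) tHat).indicator (fun u => fc1 u * H (t - u)) u := by
      intro u hu
      obtain ⟨hu1, hu2⟩ := Set.mem_Ioc.mp hu
      rcases le_or_gt u tHat with h | h
      · rw [hfa u hu1 h, Set.indicator_of_mem (Set.mem_Ioc.mpr ⟨hu1, h⟩)]
      · rw [hfb u h, Set.indicator_of_notMem
          (fun hmem => absurd (Set.mem_Ioc.mp hmem).2 (not_le.mpr h)), zero_mul]
    rw [setIntegral_congr_fun measurableSet_Ioc hstep,
      setIntegral_indicator measurableSet_Ioc]
    congr 1
    rw [Set.Ioc_inter_Ioc]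
    simp [min_eq_right ht, max_self]
  -- dominated convergence
  have hmain : Tendsto (fun t => ∫ u in Ioc 0 tHat, fc1 u * H (t - u)) atTop
      (𝓝 (∫ u in Ioc 0 tHat, fc1 u * Hinf)) := by
    apply tendsto_integral_filter_of_dominated_convergence (bound := fun _ => K * M)
    · filter_upwards [eventually_ge_atTop (tHat + 1)] with t ht
      have : (fun u => F u * G (t - u)) =ᵐ[volume.restrict (Ioc 0 tHat)]
          (fun u => fc1 u * H (t - u)) := by
        filter_upwards [ae_restrict_mem measurableSet_Ioc] with u hu
        rw [← hFeq u hu.1.le, ← hHG (t - u) (by linarith [hu.2])]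
      exact ((hFcont.mul (hGcont.comp (continuous_const.sub continuous_id))).aestronglyMeasurable.restrict).congr this
    · filter_upwards [eventually_ge_atTop (tHat + 1)] with t ht
      filter_upwards [ae_restrict_mem measurableSet_Ioc] with u hu
      rw [norm_mul, Real.norm_eq_abs, Real.norm_eq_abs]
      have hb1 : |fc1 u| ≤ K := hfc1bd u hu.1.le
      have hb2 : |H (t - u)| ≤ M := hM (t - u) (by linarith [hu.2])
      exact mul_le_mul hb1 hb2 (abs_nonneg _) hK0
    · exact integrable_const _
    · filter_upwards with u
      have h3 : Tendsto (fun t : ℝ => H (t - u)) atTop (𝓝 Hinf) := by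
        apply hHtends.comp
        simpa [sub_eq_add_neg] using tendsto_atTop_add_const_right atTop (-u) tendsto_id
      exact h3.const_mul _
  -- put everything together
  have hIval : (∫ u in Ioc 0 tHat, fc1 u * Hinf) =
      (C * ∑' n, c n * (tHat - (1 - Real.exp (-(a n * tHat))) / a n)) * Hinf := by
    rw [integral_mul_const, ← intervalIntegral.integral_of_le h1.le, hI1]
  rw [hIval] at hmain
  have hfull : Tendsto (fun t => (∫ u in (0:ℝ)..t, fhat u * H (t - u)) +
      (∫ x in tHat..τ, fc1 x) + ∫ x in Set.Ioi τ, fc2 x) atTop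
      (𝓝 ((C * ∑' n, c n * (tHat - (1 - Real.exp (-(a n * tHat))) / a n)) * Hinf +
        (∫ x in tHat..τ, fc1 x) + ∫ x in Set.Ioi τ, fc2 x)) := by
    apply Tendsto.add_const
    apply Tendsto.add_const
    exact hmain.congr' (hconv_eq.mono (fun t h => h.symm))
  -- final algebra
  have halg : (C * ∑' n, c n * (tHat - (1 - Real.exp (-(a n * tHat))) / a n)) * Hinf +
      (∫ x in tHat..τ, fc1 x) + ∫ x in Set.Ioi τ, fc2 x =
      C * ∑' n, c n * ((Hinf - 1) * (tHat - (1 - Real.exp (-(a n * tHat))) / a n) + τ) := by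
    rw [hI2, hI3]
    have hA : ∀ n, 0 ≤ tHat - (1 - Real.exp (-(a n * tHat))) / a n ∧
        tHat - (1 - Real.exp (-(a n * tHat))) / a n ≤ tHat := by
      intro n
      have := Abound (ha n) (le_refl 0).ge h1.le
      simpa [Real.exp_zero] using this
    have SA : Summable fun n => c n * (tHat - (1 - Real.exp (-(a n * tHat))) / a n) := by
      apply Summable.of_norm_bounded (hsum.mul_right tHat)
      intro n
      rw [Real.norm_eq_abs, abs_mul, abs_of_nonneg (hA n).1]
      exact mul_le_mul_of_nonneg_left (hA n).2 (abs_nonneg _)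
    have SB : Summable fun n => c n *
        ((τ - tHat) - (Real.exp (-(a n * tHat)) - Real.exp (-(a n * τ))) / a n) := by
      apply Summable.of_norm_bounded (hsum.mul_right (τ - tHat))
      intro n
      have := Abound (ha n) h1.le h2
      rw [Real.norm_eq_abs, abs_mul, abs_of_nonneg this.1]
      exact mul_le_mul_of_nonneg_left this.2 (abs_nonneg _)
    have SE : Summable fun n => c n * ((1 - Real.exp (-(a n * τ))) / a n) := by
      apply Summable.of_norm_bounded (hsum.mul_right τ)
      intro n
      have h3 : (1 - Real.exp (-(a n * τ))) / a n ≤ τ := by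
        rw [div_le_iff₀ (ha n)]
        nlinarith [Real.add_one_le_exp (-(a n * τ))]
      have h4 : 0 ≤ (1 - Real.exp (-(a n * τ))) / a n := by
        apply div_nonneg _ (ha n).le
        have : Real.exp (-(a n * τ)) ≤ 1 :=
          Real.exp_le_one_iff.mpr (by nlinarith [ha n])
        linarith
      rw [Real.norm_eq_abs, abs_mul, abs_of_nonneg h4]
      exact mul_le_mul_of_nonneg_left h3 (abs_nonneg _)
    have expand : (C * ∑' n, c n * (tHat - (1 - Real.exp (-(a n * tHat))) / a n)) * Hinf =
        C * ∑' n, Hinf * (c n * (tHat - (1 - Real.exp (-(a n * tHat))) / a n)) := by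
      rw [tsum_mul_left]; ring
    rw [expand, ← mul_add, ← mul_add, ← Summable.tsum_add (SA.mul_left Hinf) SB,
      ← Summable.tsum_add ((SA.mul_left Hinf).add SB) SE]
    congr 1
    apply tsum_congr
    intro n
    have hane : a n ≠ 0 := (ha n).ne'
    field_simp
    ring
  rw [← halg]
  exact hfull
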